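/- Let K₁ and K₂ be distinct maximal cliques in a shortest path graph H = S(G,a,b) that share exactly one vertex, and assume each of K₁, K₂ has at least one edge. Then the difference index of K₁ is distinct from the difference index of K₂, where the difference index of a maximal clique with an edge is the common index level at which every pair of distinct geodesics in the clique differs. -/

import Mathlib

open SimpleGraph

variable {V : Type*}

lemma walk_support_inj {G : SimpleGraph V} :
    ∀ {u v : V} (p q : G.Walk u v), p.support = q.support → p = q := by
  intro u v p
  induction p with
  | nil =>
    intro q h
    cases q with
    | nil => rfl
    | cons h' q => simp [Walk.support_cons] at h
  | cons h' p ih =>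
    intro q hq
    cases q with
    | nil => simp [Walk.support_cons] at hq
    | cons h'' q =>
      simp only [Walk.support_cons, List.cons.injEq, true_and] at hq
      have hc : p.support.head? = q.support.head? := by rw [hq]
      rw [p.support_eq_cons, q.support_eq_cons] at hc
      simp only [List.head?_cons, Option.some.injEq] at hc
      subst hc
      rw [ih q hq]

/-- An `(a,b)`-geodesic in `G`: a shortest path from `a` to `b`. -/
def Geodesic (G : SimpleGraph V) (a b : V) : Type _ :=
  {p : G.Walk a b // p.IsPath ∧ p.length = G.dist a b}

/-- The set of index levels at which two geodesics differ
(position `i` in the support list is index level `i`; position `0` is `a`). -/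
def diffIndices (G : SimpleGraph V) (a b : V) (U W : Geodesic G a b) : Set ℕ :=
  {i | U.1.support[i]? ≠ W.1.support[i]?}

/-- The shortest path graph `S(G,a,b)`: vertices are the `(a,b)`-geodesics,
two geodesics being adjacent iff they differ at exactly one index level. -/
def SPG (G : SimpleGraph V) (a b : V) : SimpleGraph (Geodesic G a b) where
  Adj U W := ∃! i, i ∈ diffIndices G a b U W
  symm := by
    constructor
    rintro U W ⟨i, hi, hu⟩
    exact ⟨i, Ne.symm hi, fun j hj => hu j (Ne.symm hj)⟩
  loopless := by
    constructor
    rintro U ⟨i, hi, -⟩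
    exact hi rfl

lemma diff_nonempty {G : SimpleGraph V} {a b : V} {U W : Geodesic G a b} (h : U ≠ W) :
    ∃ n, n ∈ diffIndices G a b U W := by
  by_contra hc
  push_neg at hc
  simp only [diffIndices, Set.mem_setOf_eq, not_not] at hc
  exact h (Subtype.ext (walk_support_inj _ _ (List.ext_getElem? hc)))

/-- maximal cliques sharing a vertex have distinct difference indices. -/
theorem stmt_4 {V : Type*} (G : SimpleGraph V) (a b : V) (hab : a ≠ b)
    (K₁ K₂ : Set (Geodesic G a b))
    (hK₁ : (SPG G a b).IsClique K₁)
    (hmax₁ : ∀ K', (SPG G a b).IsClique K' → K₁ ⊆ K' → K' = K₁)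
    (hK₂ : (SPG G a b).IsClique K₂)
    (hmax₂ : ∀ K', (SPG G a b).IsClique K' → K₂ ⊆ K' → K' = K₂)
    (hne : K₁ ≠ K₂) (x : Geodesic G a b) (hshare : K₁ ∩ K₂ = {x})
    (hedge₁ : ∃ U ∈ K₁, ∃ W ∈ K₁, U ≠ W) (hedge₂ : ∃ U ∈ K₂, ∃ W ∈ K₂, U ≠ W)
    (i₁ i₂ : ℕ)
    (hi₁ : ∀ U ∈ K₁, ∀ W ∈ K₁, U ≠ W → diffIndices G a b U W = {i₁})
    (hi₂ : ∀ U ∈ K₂, ∀ W ∈ K₂, U ≠ W → diffIndices G a b U W = {i₂}) :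
    i₁ ≠ i₂ := by
  intro heq
  subst heq
  have hx1 : x ∈ K₁ := by
    have : x ∈ K₁ ∩ K₂ := hshare ▸ rfl
    exact this.1
  have hx2 : x ∈ K₂ := by
    have : x ∈ K₁ ∩ K₂ := hshare ▸ rfl
    exact this.2
  -- pick W' ∈ K₂ with W' ≠ x
  obtain ⟨U, hU, W, hW, hUW⟩ := hedge₂
  obtain ⟨W', hW', hW'x⟩ : ∃ W' ∈ K₂, W' ≠ x := by
    by_cases h : U = x
    · exact ⟨W, hW, fun hh => hUW (h.trans hh.symm)⟩
    · exact ⟨U, hU, h⟩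
  have hW'notK₁ : W' ∉ K₁ := fun h =>
    hW'x (Set.mem_singleton_iff.mp (hshare ▸ Set.mem_inter h hW'))
  -- key: every P ∈ K₁ differs from W' exactly at i₁
  have key : ∀ P ∈ K₁, diffIndices G a b P W' = {i₁} := by
    intro P hP
    have hPW' : P ≠ W' := fun h => hW'notK₁ (h ▸ hP)
    have hsub : diffIndices G a b P W' ⊆ {i₁} := by
      by_cases hPx : P = x
      · subst hPx
        exact (hi₂ P hx2 W' hW' (fun h => hW'x h.symm)).le
      · intro n hn
        by_contra hni
        have h1 : n ∉ diffIndices G a b P x := by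
          rw [hi₁ P hP x hx1 hPx]; exact hni
        have h2 : n ∉ diffIndices G a b x W' := by
          rw [hi₂ x hx2 W' hW' (fun h => hW'x h.symm)]; exact hni
        simp only [diffIndices, Set.mem_setOf_eq, not_not] at h1 h2
        exact hn (h1.trans h2)
    obtain ⟨n, hn⟩ := diff_nonempty hPW'
    have := hsub hn
    rw [Set.eq_singleton_iff_unique_mem]
    exact ⟨this ▸ hn, fun m hm => hsub hm⟩
  -- K₁ ∪ {W'} is a clique extending K₁, contradicting maximality
  have hclique : (SPG G a b).IsClique (insert W' K₁) := by
    intro P hP Q hQ hPQ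
    have adj : ∀ P ∈ K₁, (SPG G a b).Adj P W' := by
      intro P hP
      refine ⟨i₁, ?_, ?_⟩
      · rw [key P hP]; rfl
      · intro j hj; rw [key P hP] at hj; exact hj
    rcases hP with hP | hP <;> rcases hQ with hQ | hQ
    · exact absurd (hP.trans hQ.symm) hPQ
    · subst hP; exact (adj Q hQ).symm
    · subst hQ; exact adj P hP
    · exact hK₁ hP hQ hPQ
  have := hmax₁ _ hclique (Set.subset_insert _ _)
  exact hW'notK₁ (this ▸ Set.mem_insert W' K₁)
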